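/- Let h : ℕ → ℝᵖ be a sequence and define the Hankel matrix H with H_{(i,r),j} = (h(i+j))_r. If rank H = n < ∞, then there exist C ∈ ℝ^{p×n}, A ∈ ℝ^{n×n}, x ∈ ℝⁿ such that h(k) = C A^k x for all k ∈ ℕ. -/

import Mathlib

open Matrix

theorem stmt_17 {p : ℕ} (h : ℕ → Fin p → ℝ) (n : ℕ)
    (hrank : Module.rank ℝ
      ↥(Submodule.span ℝ (Set.range
          (fun j : ℕ => fun ir : ℕ × Fin p => h (ir.1 + j) ir.2))) = n) :
    ∃ (C : Matrix (Fin p) (Fin n) ℝ) (A : Matrix (Fin n) (Fin n) ℝ) (x : Fin n → ℝ),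
      ∀ k : ℕ, h k = C.mulVec ((A ^ k).mulVec x) := by
  classical
  set c : ℕ → ℕ × Fin p → ℝ := fun j ir => h (ir.1 + j) ir.2 with hcdef
  set V : Submodule ℝ (ℕ × Fin p → ℝ) := Submodule.span ℝ (Set.range c) with hVdef
  -- the shift operator
  let S : (ℕ × Fin p → ℝ) →ₗ[ℝ] (ℕ × Fin p → ℝ) :=
    { toFun := fun f ir => f (ir.1 + 1, ir.2)
      map_add' := fun f g => rfl
      map_smul' := fun a f => rfl }
  have hSc : ∀ j, S (c j) = c (j + 1) := by
    intro j
    funext ir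
    show h (ir.1 + 1 + j) ir.2 = h (ir.1 + (j + 1)) ir.2
    congr 1
    omega
  have hSV : ∀ v ∈ V, S v ∈ V := by
    intro v hv
    have hle : V.map S ≤ V := by
      rw [hVdef, Submodule.map_span, Submodule.span_le]
      rintro _ ⟨_, ⟨j, rfl⟩, rfl⟩
      exact Submodule.subset_span ⟨j + 1, (hSc j).symm⟩
    exact hle (Submodule.mem_map_of_mem hv)
  let T : V →ₗ[ℝ] V := S.restrict hSV
  have hfin : Module.Finite ℝ V := Module.finite_of_rank_eq_nat hrank
  have hfr : Module.finrank ℝ V = n := Module.finrank_eq_of_rank_eq hrank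
  let b : Module.Basis (Fin n) ℝ V := Module.finBasisOfFinrankEq ℝ V hfr
  let cv : ℕ → V := fun j => ⟨c j, Submodule.subset_span ⟨j, rfl⟩⟩
  have hT : ∀ j, T (cv j) = cv (j + 1) := by
    intro j
    apply Subtype.ext
    show S (c j) = c (j + 1)
    exact hSc j
  have hTk : ∀ k, (T ^ k) (cv 0) = cv k := by
    intro k
    induction k with
    | zero => rfl
    | succ k ih =>
      rw [pow_succ', Module.End.mul_apply, ih, hT]
  refine ⟨Matrix.of (fun r i => (b i : ℕ × Fin p → ℝ) (0, r)),
    LinearMap.toMatrix b b T, b.repr (cv 0), ?_⟩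
  intro k
  have hA : (LinearMap.toMatrix b b T) ^ k = LinearMap.toMatrix b b (T ^ k) := by
    induction k with
    | zero => simp [LinearMap.toMatrix_one]
    | succ k ih => rw [pow_succ, pow_succ, ih, LinearMap.toMatrix_mul]
  rw [hA, LinearMap.toMatrix_mulVec_repr, hTk]
  funext r
  have hv : (cv k : ℕ × Fin p → ℝ) = ∑ i, b.repr (cv k) i • ((b i : ℕ × Fin p → ℝ)) := by
    conv_lhs => rw [← b.sum_repr (cv k)]
    simp only [Submodule.coe_sum, Submodule.coe_smul]
  have hk : h k r = (cv k : ℕ × Fin p → ℝ) (0, r) := by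
    show h k r = h (0 + k) r
    rw [Nat.zero_add]
  rw [hk, hv]
  simp [Matrix.mulVec, dotProduct, Finset.sum_apply, mul_comm]
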